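/- Let Ω be a measurable subset of ℝ^N with finite Lebesgue measure and let L ∈ ℕ. For l ∈ {1,…,L}, let f^l, f^l_n : Ω → ℝ (n ∈ ℕ) be measurable functions and let g^l, g^l_n ∈ L¹(Ω) (n ∈ ℕ). Assume that for each l one has f^l_n → f^l almost everywhere in Ω and g^l_n → g^l weakly in L¹(Ω), that each sum ∑_{l=1}^L f^l_n·g^l_n belongs to L¹(Ω), and that ∑_{l=1}^L f^l_n·g^l_n → ξ weakly in L¹(Ω) for some ξ ∈ L¹(Ω). Then ξ = ∑_{l=1}^L f^l·g^l almost everywhere in Ω. (Note: the individual sequences (f^l_n·g^l_n) are not assumed to converge, only their sum.) -/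

import Mathlib

open MeasureTheory Filter
open scoped ENNReal NNReal

section Aux

variable {α : Type*} [MeasurableSpace α] {μ : Measure α}

local instance factTop : Fact ((1 : ℝ≥0∞) ≤ ⊤) := ⟨le_top⟩

lemma lp_top_ae_bound (φ : Lp ℝ ⊤ μ) : ∀ᵐ x ∂μ, ‖φ x‖ ≤ ‖φ‖ := by
  have h := ae_le_eLpNormEssSup (f := (φ : α → ℝ)) (μ := μ)
  have hfin : eLpNormEssSup (φ : α → ℝ) μ ≠ ⊤ := by
    have h2 := Lp.eLpNorm_lt_top φ
    rw [eLpNorm_exponent_top] at h2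
    exact h2.ne
  filter_upwards [h] with x hx
  have h3 := ENNReal.toReal_mono hfin hx
  simpa [Lp.norm_def, eLpNorm_exponent_top] using h3

noncomputable def pairingCLM (G : α → ℝ) (hG : Integrable G μ) : Lp ℝ ⊤ μ →L[ℝ] ℝ :=
  LinearMap.mkContinuous
    { toFun := fun φ => ∫ x, φ x * G x ∂μ
      map_add' := by
        intro φ ψ
        have h1 : Integrable (fun x => φ x * G x) μ :=
          hG.bdd_mul (Lp.aestronglyMeasurable φ) (lp_top_ae_bound φ)
        have h2 : Integrable (fun x => ψ x * G x) μ :=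
          hG.bdd_mul (Lp.aestronglyMeasurable ψ) (lp_top_ae_bound ψ)
        rw [← integral_add h1 h2]
        refine integral_congr_ae ?_
        filter_upwards [Lp.coeFn_add φ ψ] with x hx
        rw [hx]
        simp [add_mul]
      map_smul' := by
        intro c φ
        simp only [RingHom.id_apply]
        rw [← integral_smul]
        refine integral_congr_ae ?_
        filter_upwards [Lp.coeFn_smul c φ] with x hx
        rw [hx]
        simp [mul_assoc] }
    (∫ x, |G x| ∂μ)
    (by
      intro φ
      simp only [LinearMap.coe_mk, AddHom.coe_mk]
      rw [mul_comm]
      refine le_trans (norm_integral_le_of_norm_le (hG.norm.const_mul ‖φ‖) ?_) ?_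
      · filter_upwards [lp_top_ae_bound φ] with x hx
        calc ‖φ x * G x‖ = ‖φ x‖ * ‖G x‖ := by simp [abs_mul]
          _ ≤ ‖φ‖ * ‖G x‖ := by gcongr
      · rw [integral_const_mul]
        simp [Real.norm_eq_abs])

lemma pairingCLM_apply (G : α → ℝ) (hG : Integrable G μ) (φ : Lp ℝ ⊤ μ) :
    pairingCLM G hG φ = ∫ x, φ x * G x ∂μ := rfl

lemma weak_l1_bound [IsFiniteMeasure μ] {ι : Type*} (G : ι → α → ℝ)
    (hG : ∀ i, Integrable (G i) μ)
    (h : ∀ φ : α → ℝ, Measurable φ → (∃ C : ℝ, ∀ᵐ x ∂μ, |φ x| ≤ C) →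
      ∃ C : ℝ, ∀ i, |∫ x, φ x * G i x ∂μ| ≤ C) :
    ∃ C : ℝ, ∀ i, ∫ x, |G i x| ∂μ ≤ C := by
  have hb : ∀ φ : Lp ℝ ⊤ μ, ∃ C : ℝ, ∀ i, ‖pairingCLM (G i) (hG i) φ‖ ≤ C := by
    intro φ
    have hsm := Lp.aestronglyMeasurable φ
    set ψ := hsm.mk (φ : α → ℝ) with hψdef
    have hψm : Measurable ψ := hsm.stronglyMeasurable_mk.measurable
    have hψb : ∀ᵐ x ∂μ, |ψ x| ≤ ‖φ‖ := by
      filter_upwards [lp_top_ae_bound φ, hsm.ae_eq_mk] with x hx1 hx2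
      rw [hψdef, ← hx2]; simpa using hx1
    obtain ⟨C, hC⟩ := h ψ hψm ⟨‖φ‖, hψb⟩
    refine ⟨C, fun i => ?_⟩
    have : pairingCLM (G i) (hG i) φ = ∫ x, ψ x * G i x ∂μ := by
      rw [pairingCLM_apply]
      refine integral_congr_ae ?_
      filter_upwards [hsm.ae_eq_mk] with x hx
      rw [hx]
    rw [Real.norm_eq_abs, this]
    exact hC i
  obtain ⟨C, hC⟩ := banach_steinhaus hb
  refine ⟨C, fun i => ?_⟩
  have hGm := (hG i).1
  set G' := hGm.mk (G i) with hG'def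
  have hG'm : Measurable G' := hGm.stronglyMeasurable_mk.measurable
  have hGG' : G i =ᵐ[μ] G' := hGm.ae_eq_mk
  set s : α → ℝ := fun x => if 0 ≤ G' x then 1 else -1 with hsdef
  have hsm' : Measurable s :=
    Measurable.ite (measurableSet_le measurable_const hG'm) measurable_const measurable_const
  have hsb : ∀ x, ‖s x‖ ≤ 1 := by
    intro x; by_cases h' : 0 ≤ G' x <;> simp [hsdef, h']
  have hmem : MemLp s ⊤ μ :=
    memLp_top_of_bound hsm'.aestronglyMeasurable 1 (Eventually.of_forall hsb)
  have hnorm : ‖hmem.toLp s‖ ≤ 1 := by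
    rw [Lp.norm_toLp]
    have h2 : eLpNorm s ⊤ μ ≤ ENNReal.ofReal 1 := by
      have := eLpNorm_le_of_ae_bound (p := (⊤ : ℝ≥0∞)) (μ := μ) (Eventually.of_forall hsb)
      simpa using this
    calc (eLpNorm s ⊤ μ).toReal ≤ (ENNReal.ofReal 1).toReal := by
          exact ENNReal.toReal_mono (by simp) h2
      _ = 1 := by simp
  have key : pairingCLM (G i) (hG i) (hmem.toLp s) = ∫ x, |G i x| ∂μ := by
    rw [pairingCLM_apply]
    refine integral_congr_ae ?_
    filter_upwards [hmem.coeFn_toLp, hGG'] with x hx1 hx2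
    rw [hx1]
    by_cases h' : 0 ≤ G' x
    · simp only [hsdef, if_pos h', one_mul]
      rw [abs_of_nonneg (hx2 ▸ h')]
    · push_neg at h'
      simp only [hsdef, if_neg (not_le.mpr h'), neg_one_mul]
      rw [abs_of_neg (hx2 ▸ h')]
  calc ∫ x, |G i x| ∂μ = pairingCLM (G i) (hG i) (hmem.toLp s) := key.symm
    _ ≤ ‖pairingCLM (G i) (hG i) (hmem.toLp s)‖ := le_abs_self _
    _ ≤ ‖pairingCLM (G i) (hG i)‖ * ‖hmem.toLp s‖ := (pairingCLM (G i) (hG i)).le_opNorm _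
    _ ≤ C * 1 := by
        refine mul_le_mul (hC i) hnorm (norm_nonneg _) ?_
        exact le_trans (norm_nonneg _) (hC i)
    _ = C := mul_one C

end Aux

lemma inner_aeeq {N L : ℕ} {Ω E : Set (Fin N → ℝ)} (hΩ : MeasurableSet Ω)
    (hΩfin : volume Ω < ⊤) (hE : MeasurableSet E) (hEΩ : E ⊆ Ω)
    {f : Fin L → (Fin N → ℝ) → ℝ} {fn : Fin L → ℕ → (Fin N → ℝ) → ℝ}
    (hf : ∀ l, Measurable (f l)) (hfn : ∀ l n, Measurable (fn l n))
    {g : Fin L → (Fin N → ℝ) → ℝ} {gn : Fin L → ℕ → (Fin N → ℝ) → ℝ}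
    {ξ : (Fin N → ℝ) → ℝ}
    (hg : ∀ l, IntegrableOn (g l) Ω) (hgn : ∀ l n, IntegrableOn (gn l n) Ω)
    (hξ : IntegrableOn ξ Ω)
    {M C : ℝ} (hM0 : 0 ≤ M) (hC0 : 0 ≤ C)
    (hfM : ∀ x ∈ E, ∀ l, |f l x| ≤ M)
    (hCb : ∀ l n, (∫ x in Ω, |gn l n x|) ≤ C)
    (hunif : ∀ l, TendstoUniformlyOn (fun n => fn l n) (f l) atTop E)
    (hweak_g : ∀ l, ∀ φ : (Fin N → ℝ) → ℝ, Measurable φ →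
      (∃ C : ℝ, ∀ᵐ x ∂(volume.restrict Ω), |φ x| ≤ C) →
      Tendsto (fun n => ∫ x in Ω, φ x * gn l n x) atTop
        (nhds (∫ x in Ω, φ x * g l x)))
    (hweak_sum : ∀ φ : (Fin N → ℝ) → ℝ, Measurable φ →
      (∃ C : ℝ, ∀ᵐ x ∂(volume.restrict Ω), |φ x| ≤ C) →
      Tendsto (fun n => ∫ x in Ω, φ x * ∑ l : Fin L, fn l n x * gn l n x) atTop
        (nhds (∫ x in Ω, φ x * ξ x))) :
    ∀ᵐ x ∂(volume.restrict E), ξ x = ∑ l : Fin L, f l x * g l x := by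
  haveI : IsFiniteMeasure (volume.restrict E) :=
    ⟨by rw [Measure.restrict_apply_univ]; exact lt_of_le_of_lt (measure_mono hEΩ) hΩfin⟩
  have key : ∀ S : Set (Fin N → ℝ), MeasurableSet S → S ⊆ E →
      (∫ x in S, ξ x) = ∫ x in S, ∑ l : Fin L, f l x * g l x := by
    intro S hS hSE
    have hSΩ : S ⊆ Ω := hSE.trans hEΩ
    set φ : (Fin N → ℝ) → ℝ := S.indicator (fun _ => 1) with hφdef
    have hφm : Measurable φ := measurable_const.indicator hS
    have hφb : ∀ x, |φ x| ≤ 1 := by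
      intro x; by_cases h : x ∈ S <;> simp [hφdef, Set.indicator, h]
    have h1 := hweak_sum φ hφm ⟨1, Eventually.of_forall hφb⟩
    set φl : Fin L → (Fin N → ℝ) → ℝ := fun l => S.indicator (f l) with hφl
    have hφlm : ∀ l, Measurable (φl l) := fun l => (hf l).indicator hS
    have hφlb : ∀ l x, |φl l x| ≤ M := by
      intro l x; by_cases h : x ∈ S
      · simpa [hφl, Set.indicator, h] using hfM x (hSE h) l
      · simp [hφl, Set.indicator, h, hM0]
    have h2 : ∀ l, Tendsto (fun n => ∫ x in Ω, φl l x * gn l n x) atTop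
        (nhds (∫ x in Ω, φl l x * g l x)) :=
      fun l => hweak_g l (φl l) (hφlm l) ⟨M, Eventually.of_forall (hφlb l)⟩
    have h3 : Tendsto (fun n => ∑ l : Fin L, ∫ x in Ω, φl l x * gn l n x) atTop
        (nhds (∑ l : Fin L, ∫ x in Ω, φl l x * g l x)) :=
      tendsto_finset_sum _ (fun l _ => h2 l)
    have hint_l : ∀ l n, Integrable (fun x => φl l x * gn l n x) (volume.restrict Ω) :=
      fun l n => (hgn l n).bdd_mul ((hφlm l).aestronglyMeasurable)
        (Eventually.of_forall (fun x => by simpa using hφlb l x))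
    have h4 : Tendsto (fun n => (∫ x in Ω, φ x * ∑ l : Fin L, fn l n x * gn l n x)
        - ∑ l : Fin L, ∫ x in Ω, φl l x * gn l n x) atTop (nhds 0) := by
      rw [NormedAddCommGroup.tendsto_nhds_zero]
      intro ε hε
      set ε' := ε / ((L + 1) * (C + 1)) with hε'
      have hε'pos : 0 < ε' := by positivity
      have hev := eventually_all.2 fun l : Fin L =>
        (Metric.tendstoUniformlyOn_iff.1 (hunif l)) (min ε' 1) (lt_min hε'pos one_pos)
      filter_upwards [hev] with n hn
      have hbound : ∀ l : Fin L, ∀ x, |φ x * fn l n x| ≤ M + 1 := by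
        intro l x; by_cases h : x ∈ S
        · have hd := hn l x (hSE h)
          rw [Real.dist_eq] at hd
          have h2' : |fn l n x| ≤ M + 1 := by
            have h3' := abs_sub_abs_le_abs_sub (fn l n x) (f l x)
            have h4' : |fn l n x - f l x| ≤ 1 := by
              rw [abs_sub_comm]; exact hd.le.trans (min_le_right _ _)
            have := hfM x (hSE h) l
            linarith
          simpa [hφdef, Set.indicator, h] using h2'
        · simp only [hφdef, Set.indicator, if_neg h]
          simp [h]
          linarith
      have hint_n : ∀ l : Fin L,
          Integrable (fun x => φ x * fn l n x * gn l n x) (volume.restrict Ω) :=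
        fun l => (hgn l n).bdd_mul ((hφm.mul (hfn l n)).aestronglyMeasurable)
          (Eventually.of_forall fun x => by rw [Real.norm_eq_abs]; exact hbound l x)
      have hsplit : (∫ x in Ω, φ x * ∑ l : Fin L, fn l n x * gn l n x)
          = ∑ l : Fin L, ∫ x in Ω, φ x * fn l n x * gn l n x := by
        rw [← integral_finset_sum _ (fun l _ => hint_n l)]
        congr 1; funext x; rw [Finset.mul_sum]
        exact Finset.sum_congr rfl fun l _ => (mul_assoc _ _ _).symm
      rw [hsplit, ← Finset.sum_sub_distrib]
      have hterm : ∀ l : Fin L,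
          ‖(∫ x in Ω, φ x * fn l n x * gn l n x) - ∫ x in Ω, φl l x * gn l n x‖
            ≤ ε' * C := by
        intro l
        rw [← integral_sub (hint_n l) (hint_l l n)]
        refine le_trans (norm_integral_le_of_norm_le ((hgn l n).norm.const_mul ε') ?_) ?_
        · refine Eventually.of_forall fun x => ?_
          by_cases h : x ∈ S
          · have hd := hn l x (hSE h)
            rw [Real.dist_eq] at hd
            have heq : φ x * fn l n x * gn l n x - φl l x * gn l n x
                = (fn l n x - f l x) * gn l n x := by
              simp only [hφdef, hφl, Set.indicator, if_pos h]; ring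
            rw [heq]
            calc ‖(fn l n x - f l x) * gn l n x‖
                = |fn l n x - f l x| * ‖gn l n x‖ := by
                  simp [Real.norm_eq_abs, abs_mul]
              _ ≤ ε' * ‖gn l n x‖ := by
                  gcongr
                  rw [abs_sub_comm]
                  exact hd.le.trans (min_le_left _ _)
          · simp only [hφdef, hφl, Set.indicator, if_neg h]
            simp [h]
            positivity
        · rw [integral_const_mul]
          have hle := hCb l n
          have : (∫ x in Ω, ‖gn l n x‖) ≤ C := by
            simpa [Real.norm_eq_abs] using hle
          calc ε' * ∫ x in Ω, ‖gn l n x‖ ≤ ε' * C := by gcongr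
            _ = ε' * C := rfl
      calc ‖∑ l : Fin L, ((∫ x in Ω, φ x * fn l n x * gn l n x)
              - ∫ x in Ω, φl l x * gn l n x)‖
          ≤ ∑ l : Fin L, ‖(∫ x in Ω, φ x * fn l n x * gn l n x)
              - ∫ x in Ω, φl l x * gn l n x‖ := norm_sum_le _ _
        _ ≤ ∑ _l : Fin L, ε' * C := Finset.sum_le_sum fun l _ => hterm l
        _ = (L : ℝ) * ε' * C := by
            simp [Finset.sum_const, Finset.card_univ]; ring
        _ < ε := by
            have hlt : (L : ℝ) * C < ((L : ℝ) + 1) * (C + 1) := by nlinarith [Nat.cast_nonneg (α := ℝ) L]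
            have hne : ((L : ℝ) + 1) * (C + 1) > 0 := by positivity
            calc (L : ℝ) * ε' * C = ((L : ℝ) * C) * ε' := by ring
              _ < (((L : ℝ) + 1) * (C + 1)) * ε' := by
                  exact mul_lt_mul_of_pos_right hlt hε'pos
              _ = ε := by rw [hε']; field_simp
    have h5 : Tendsto (fun n => ∑ l : Fin L, ∫ x in Ω, φl l x * gn l n x) atTop
        (nhds (∫ x in Ω, φ x * ξ x)) := by
      have h6 := h1.sub h4
      rw [sub_zero] at h6
      refine h6.congr fun n => ?_
      exact sub_sub_cancel _ _
    have hmain : (∫ x in Ω, φ x * ξ x) = ∑ l : Fin L, ∫ x in Ω, φl l x * g l x :=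
      tendsto_nhds_unique h5 h3
    have hLHS : (∫ x in Ω, φ x * ξ x) = ∫ x in S, ξ x := by
      have heq : (fun x => φ x * ξ x) = S.indicator ξ := by
        funext x; by_cases h : x ∈ S <;> simp [hφdef, Set.indicator, h]
      rw [heq, integral_indicator hS, Measure.restrict_restrict hS,
        Set.inter_eq_self_of_subset_left hSΩ]
    have hRHS : ∀ l : Fin L, (∫ x in Ω, φl l x * g l x) = ∫ x in S, f l x * g l x := by
      intro l
      have heq : (fun x => φl l x * g l x) = S.indicator (fun x => f l x * g l x) := by
        funext x; by_cases h : x ∈ S <;> simp [hφl, Set.indicator, h]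
      rw [heq, integral_indicator hS, Measure.restrict_restrict hS,
        Set.inter_eq_self_of_subset_left hSΩ]
    have hfg_int : ∀ l : Fin L, IntegrableOn (fun x => f l x * g l x) S := by
      intro l
      refine ((hg l).mono_set hSΩ).bdd_mul (c := M) (hf l).aestronglyMeasurable.restrict ?_
      refine (ae_restrict_iff' hS).2 (Eventually.of_forall fun x hx => ?_)
      simpa using hfM x (hSE hx) l
    calc (∫ x in S, ξ x) = ∫ x in Ω, φ x * ξ x := hLHS.symm
      _ = ∑ l : Fin L, ∫ x in Ω, φl l x * g l x := hmain
      _ = ∑ l : Fin L, ∫ x in S, f l x * g l x := Finset.sum_congr rfl fun l _ => hRHS l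
      _ = ∫ x in S, ∑ l : Fin L, f l x * g l x :=
          (integral_finset_sum _ (fun l _ => hfg_int l)).symm
  refine ae_eq_of_forall_setIntegral_eq_of_sigmaFinite ?_ ?_ ?_
  · intro s hs hμs
    rw [IntegrableOn, Measure.restrict_restrict hs]
    exact hξ.mono_set (Set.inter_subset_right.trans hEΩ)
  · intro s hs hμs
    rw [IntegrableOn, Measure.restrict_restrict hs]
    refine integrable_finset_sum _ fun l _ => ?_
    have hSΩ : s ∩ E ⊆ Ω := Set.inter_subset_right.trans hEΩ
    refine ((hg l).mono_set hSΩ).bdd_mul (c := M) (hf l).aestronglyMeasurable.restrict ?_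
    refine (ae_restrict_iff' (hs.inter hE)).2 (Eventually.of_forall fun x hx => ?_)
    simpa using hfM x hx.2 l
  · intro s hs hμs
    rw [Measure.restrict_restrict hs]
    exact key (s ∩ E) (hs.inter hE) Set.inter_subset_right
/-- **Weak–a.e. convergence for sums (Lemma A.2).**
If `Ω ⊆ ℝ^N` is measurable with finite measure, `L ∈ ℕ`, and for each
`l ∈ {1,…,L}` one has `fˡₙ → fˡ` a.e. in `Ω` and `gˡₙ ⇀ gˡ` weakly in `L¹(Ω)`,
and if `∑_{l=1}^L fˡₙ·gˡₙ ⇀ ξ` weakly in `L¹(Ω)`, then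
`ξ = ∑_{l=1}^L fˡ·gˡ` a.e. in `Ω`. Weak `L¹` convergence is formulated by
testing against essentially bounded measurable functions. The individual
sequences `(fˡₙ·gˡₙ)ₙ` are not assumed to converge, only their sum. -/
theorem weak_ae_convergence_sums {N : ℕ} (Ω : Set (Fin N → ℝ))
    (hΩ : MeasurableSet Ω) (hΩfin : volume Ω < ⊤) (L : ℕ)
    (f : Fin L → (Fin N → ℝ) → ℝ) (fn : Fin L → ℕ → (Fin N → ℝ) → ℝ)
    (hf : ∀ l, Measurable (f l)) (hfn : ∀ l n, Measurable (fn l n))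
    (g : Fin L → (Fin N → ℝ) → ℝ) (gn : Fin L → ℕ → (Fin N → ℝ) → ℝ)
    (ξ : (Fin N → ℝ) → ℝ)
    (hg : ∀ l, IntegrableOn (g l) Ω) (hgn : ∀ l n, IntegrableOn (gn l n) Ω)
    (hξ : IntegrableOn ξ Ω)
    (hae : ∀ l, ∀ᵐ x ∂(volume.restrict Ω),
      Tendsto (fun n => fn l n x) atTop (nhds (f l x)))
    (hweak_g : ∀ l, ∀ φ : (Fin N → ℝ) → ℝ, Measurable φ →
      (∃ C : ℝ, ∀ᵐ x ∂(volume.restrict Ω), |φ x| ≤ C) →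
      Tendsto (fun n => ∫ x in Ω, φ x * gn l n x) atTop
        (nhds (∫ x in Ω, φ x * g l x)))
    (hsum_int : ∀ n, IntegrableOn (fun x => ∑ l : Fin L, fn l n x * gn l n x) Ω)
    (hweak_sum : ∀ φ : (Fin N → ℝ) → ℝ, Measurable φ →
      (∃ C : ℝ, ∀ᵐ x ∂(volume.restrict Ω), |φ x| ≤ C) →
      Tendsto (fun n => ∫ x in Ω, φ x * ∑ l : Fin L, fn l n x * gn l n x) atTop
        (nhds (∫ x in Ω, φ x * ξ x))) :
    ∀ᵐ x ∂(volume.restrict Ω), ξ x = ∑ l : Fin L, f l x * g l x := by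
  classical
  haveI : IsFiniteMeasure (volume.restrict Ω) :=
    ⟨by rw [Measure.restrict_apply_univ]; exact hΩfin⟩
  -- Step 1: uniform L¹ bound on the gn's
  obtain ⟨C₀, hC₀⟩ : ∃ C : ℝ, ∀ p : Fin L × ℕ,
      (∫ x, |gn p.1 p.2 x| ∂(volume.restrict Ω)) ≤ C := by
    refine weak_l1_bound (ι := Fin L × ℕ) (fun p => gn p.1 p.2)
      (fun p => hgn p.1 p.2) ?_
    intro φ hφm hφb
    have hb : ∀ l : Fin L, ∃ B : ℝ, ∀ n : ℕ,
        |∫ x, φ x * gn l n x ∂(volume.restrict Ω)| ≤ B := by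
      intro l
      obtain ⟨B, hB⟩ := ((hweak_g l φ hφm hφb).abs).bddAbove_range
      exact ⟨B, fun n => hB ⟨n, rfl⟩⟩
    choose B hB using hb
    refine ⟨∑ l : Fin L, |B l|, fun p => ?_⟩
    exact (hB p.1 p.2).trans ((le_abs_self _).trans
      (Finset.single_le_sum (fun i _ => abs_nonneg (B i)) (Finset.mem_univ p.1)))
  set C : ℝ := max C₀ 0 with hCdef
  have hC0 : 0 ≤ C := le_max_right _ _
  have hCb : ∀ (l : Fin L) (n : ℕ), (∫ x in Ω, |gn l n x|) ≤ C :=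
    fun l n => (hC₀ (l, n)).trans (le_max_left _ _)
  -- Step 2: good sets of almost full measure
  have main : ∀ ε : ℝ, 0 < ε → ∃ E : Set (Fin N → ℝ), MeasurableSet E ∧ E ⊆ Ω ∧
      volume (Ω \ E) ≤ ENNReal.ofReal ε ∧
      (∀ᵐ x ∂(volume.restrict E), ξ x = ∑ l : Fin L, f l x * g l x) := by
    intro ε hε
    set A : ℕ → Set (Fin N → ℝ) := fun M => {x | ∀ l : Fin L, |f l x| ≤ M} with hA
    have hAm : ∀ M, MeasurableSet (A M) := by
      intro M
      have : A M = ⋂ l : Fin L, {x | |f l x| ≤ M} := by ext x; simp [hA]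
      rw [this]
      exact MeasurableSet.iInter fun l =>
        measurableSet_le (hf l).abs measurable_const
    have hAmono : ∀ a b : ℕ, a ≤ b → A a ⊆ A b := by
      intro a b hab x hx l
      exact (hx l).trans (by exact_mod_cast Nat.cast_le.2 hab)
    have hAanti : Antitone (fun M => Ω \ A M) := by
      intro a b hab
      exact Set.diff_subset_diff_right (hAmono a b hab)
    have hInter : (⋂ M : ℕ, (Ω \ A M)) = ∅ := by
      ext x
      simp only [Set.mem_iInter, Set.mem_empty_iff_false, iff_false, not_forall]
      obtain ⟨M, hM⟩ := exists_nat_ge (∑ l : Fin L, |f l x|)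
      refine ⟨M, fun h => h.2 fun l => ?_⟩
      exact le_trans (Finset.single_le_sum (fun i _ => abs_nonneg (f i x))
        (Finset.mem_univ l)) hM
    have htend : Tendsto (fun M : ℕ => volume (Ω \ A M)) atTop (nhds 0) := by
      have h := tendsto_measure_iInter_atTop (μ := volume) (s := fun M => Ω \ A M)
        (fun M => (hΩ.diff (hAm M)).nullMeasurableSet) hAanti
        ⟨0, ((measure_mono Set.diff_subset).trans_lt hΩfin).ne⟩
      rw [hInter] at h
      simpa [Function.comp_def] using h
    have hev : ∀ᶠ M : ℕ in atTop, volume (Ω \ A M) < ENNReal.ofReal (ε / 2) := by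
      refine htend.eventually_lt_const ?_
      exact ENNReal.ofReal_pos.2 (by positivity)
    obtain ⟨M, hM⟩ := hev.exists
    set s : Set (Fin N → ℝ) := Ω ∩ A M with hs
    have hsm : MeasurableSet s := hΩ.inter (hAm M)
    have hsfin : volume s ≠ ⊤ := ((measure_mono Set.inter_subset_left).trans_lt hΩfin).ne
    have hteΩ : ∀ l : Fin L, ∀ᵐ x ∂(volume : Measure (Fin N → ℝ)),
        x ∈ s → Tendsto (fun n => fn l n x) atTop (nhds (f l x)) := by
      intro l
      have h := ae_imp_of_ae_restrict (hae l)
      filter_upwards [h] with x hx hxs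
      exact hx hxs.1
    have hEg : ∀ l : Fin L, ∃ t, t ⊆ s ∧ MeasurableSet t ∧
        volume t ≤ ENNReal.ofReal (ε / (2 * (L + 1))) ∧
        TendstoUniformlyOn (fun n => fn l n) (f l) atTop (s \ t) := by
      intro l
      obtain ⟨t, h1, h2, h3, h4⟩ := tendstoUniformlyOn_of_ae_tendsto
        (f := fun n => fn l n) (g := f l)
        (fun n => (hfn l n).stronglyMeasurable) (hf l).stronglyMeasurable hsm hsfin
        (hteΩ l) (ε := ε / (2 * (L + 1))) (by positivity)
      exact ⟨t, h1, h2, h3, h4⟩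
    choose t hts htm htme htu using hEg
    set E : Set (Fin N → ℝ) := s \ ⋃ l, t l with hEdef
    have hEm : MeasurableSet E := hsm.diff (MeasurableSet.iUnion htm)
    have hEΩ : E ⊆ Ω := fun x hx => hx.1.1
    have hdiff : volume (Ω \ E) ≤ ENNReal.ofReal ε := by
      have h1 : Ω \ E ⊆ (Ω \ A M) ∪ ⋃ l, t l := by
        intro x hx
        by_cases hA' : x ∈ A M
        · right
          by_contra h
          exact hx.2 ⟨⟨hx.1, hA'⟩, h⟩
        · left; exact ⟨hx.1, hA'⟩
      have h2 : volume (⋃ l, t l) ≤ ENNReal.ofReal (ε / 2) := by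
        calc volume (⋃ l, t l) ≤ ∑' l : Fin L, volume (t l) := measure_iUnion_le _
          _ = ∑ l : Fin L, volume (t l) := tsum_fintype _
          _ ≤ ∑ _l : Fin L, ENNReal.ofReal (ε / (2 * (L + 1))) :=
              Finset.sum_le_sum fun l _ => htme l
          _ = (L : ℝ≥0∞) * ENNReal.ofReal (ε / (2 * (L + 1))) := by
              simp [Finset.sum_const, Finset.card_univ, nsmul_eq_mul]
          _ = ENNReal.ofReal ((L : ℝ) * (ε / (2 * (L + 1)))) := by
              rw [ENNReal.ofReal_mul (by positivity)]
              congr 1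
              simp
          _ ≤ ENNReal.ofReal (ε / 2) := by
              apply ENNReal.ofReal_le_ofReal
              have hL : (0:ℝ) ≤ L := Nat.cast_nonneg L
              have h2L : (0:ℝ) < 2 * ((L:ℝ) + 1) := by positivity
              rw [← mul_div_assoc, div_le_div_iff₀ h2L (by norm_num)]
              nlinarith [hε.le]
      calc volume (Ω \ E) ≤ volume ((Ω \ A M) ∪ ⋃ l, t l) := measure_mono h1
        _ ≤ volume (Ω \ A M) + volume (⋃ l, t l) := measure_union_le _ _
        _ ≤ ENNReal.ofReal (ε / 2) + ENNReal.ofReal (ε / 2) := add_le_add hM.le h2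
        _ = ENNReal.ofReal ε := by
            rw [← ENNReal.ofReal_add (by positivity) (by positivity)]
            norm_num
    have hfM : ∀ x ∈ E, ∀ l : Fin L, |f l x| ≤ (M : ℝ) := fun x hx l => hx.1.2 l
    have hunifE : ∀ l : Fin L, TendstoUniformlyOn (fun n => fn l n) (f l) atTop E :=
      fun l => (htu l).mono (Set.diff_subset_diff_right (Set.subset_iUnion t l))
    exact ⟨E, hEm, hEΩ, hdiff,
      inner_aeeq hΩ hΩfin hEm hEΩ hf hfn hg hgn hξ (Nat.cast_nonneg M) hC0 hfM hCb
        hunifE hweak_g hweak_sum⟩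
  -- Step 3: assemble
  rw [ae_iff, Measure.restrict_apply' hΩ]
  have hbound : ∀ k : ℕ,
      volume ({x | ¬ ξ x = ∑ l : Fin L, f l x * g l x} ∩ Ω)
        ≤ ENNReal.ofReal (1 / (k + 1)) := by
    intro k
    obtain ⟨E, hEm, hEΩ, hεE, haeE⟩ := main (1 / (k + 1)) (by positivity)
    have h0 : volume ({x | ¬ ξ x = ∑ l : Fin L, f l x * g l x} ∩ E) = 0 := by
      rw [ae_iff, Measure.restrict_apply' hEm] at haeE
      exact haeE
    calc volume ({x | ¬ ξ x = ∑ l : Fin L, f l x * g l x} ∩ Ω)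
        ≤ volume (({x | ¬ ξ x = ∑ l : Fin L, f l x * g l x} ∩ E)
            ∪ (Ω \ E)) := by
          apply measure_mono
          intro x hx
          by_cases h : x ∈ E
          · exact Or.inl ⟨hx.1, h⟩
          · exact Or.inr ⟨hx.2, h⟩
      _ ≤ volume ({x | ¬ ξ x = ∑ l : Fin L, f l x * g l x} ∩ E) + volume (Ω \ E) :=
          measure_union_le _ _
      _ ≤ 0 + ENNReal.ofReal (1 / (k + 1)) := add_le_add h0.le hεE
      _ = ENNReal.ofReal (1 / (k + 1)) := by rw [zero_add]
  refine le_antisymm ?_ zero_le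
  have htend0 : Tendsto (fun k : ℕ => ENNReal.ofReal (1 / (k + 1))) atTop (nhds 0) := by
    have h := ENNReal.tendsto_ofReal (tendsto_one_div_add_atTop_nhds_zero_nat)
    simpa using h
  exact ge_of_tendsto' htend0 hbound
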